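/- Let Γ be a connected finite simplicial graph and let H_Φ be a strong generalized Bestvina–Brady subgroup of A_Γ with basis subgraphs Γ₁, …, Γ_d. If each basis subgraph Γ_i is a join and each pair of distinct basis subgraphs commutes (every vertex of Γ_i is adjacent to every vertex of Γ_j for i ≠ j), then the distortion of H_Φ in A_Γ is linear, i.e. Dist_{A_Γ}^{H_Φ} ∼ n. -/

import Mathlib

/-- The word length of `g` with respect to a set `S` of letters. -/
noncomputable def wordLength {G : Type*} [Group G] (S : Set G) (g : G) : ℕ :=
  sInf {n | ∃ l : List G, l.length = n ∧ (∀ x ∈ l, x ∈ S ∨ x⁻¹ ∈ S) ∧ l.prod = g}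

/-- The distortion function: `Dist(r) = max { |h|_T : h ∈ H, |h|_S ≤ r }`. -/
noncomputable def distortion {G : Type*} [Group G] (S T : Set G) (H : Subgroup G)
    (r : ℕ) : ℕ :=
  sSup {n | ∃ h ∈ H, wordLength S h ≤ r ∧ wordLength T h = n}

/-- `f ⪯ g`. -/
def Dominated (f g : ℕ → ℕ) : Prop :=
  ∃ A B C D : ℕ, 0 < A ∧ 0 < B ∧ 0 < C ∧ ∀ x : ℕ, D < x → f x ≤ A * g (B * x) + C * x

/-- `f ∼ g`. -/
def FEquiv (f g : ℕ → ℕ) : Prop := Dominated f g ∧ Dominated g f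

/-- The defining relators of the right-angled Artin group of a graph `Γ`. -/
def raagRels {V : Type*} (Γ : SimpleGraph V) : Set (FreeGroup V) :=
  {r | ∃ u v : V, Γ.Adj u v ∧
    r = FreeGroup.of u * FreeGroup.of v * (FreeGroup.of u)⁻¹ * (FreeGroup.of v)⁻¹}

/-- The right-angled Artin group of a graph `Γ`. -/
abbrev RAAG {V : Type*} (Γ : SimpleGraph V) : Type _ := PresentedGroup (raagRels Γ)

/-- The standard generator of `RAAG Γ` associated to a vertex. -/
def raagGen {V : Type*} (Γ : SimpleGraph V) (v : V) : RAAG Γ := PresentedGroup.of v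

/-- A graph is a join if its vertex set splits into two nonempty parts with every
vertex of one part adjacent to every vertex of the other. -/
def IsJoin {α : Type*} (Γ : SimpleGraph α) : Prop :=
  ∃ V₁ V₂ : Set α, V₁.Nonempty ∧ V₂.Nonempty ∧ Disjoint V₁ V₂ ∧ V₁ ∪ V₂ = Set.univ ∧
    ∀ u ∈ V₁, ∀ v ∈ V₂, Γ.Adj u v

/- ## auxiliary word lemmas -/
section WordLemmas
variable {G : Type*} [Group G] {S : Set G} {g : G}

abbrev OkWord (S : Set G) (l : List G) : Prop := ∀ x ∈ l, x ∈ S ∨ x⁻¹ ∈ S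

lemma wordLength_le {l : List G} (hl : OkWord S l) (hp : l.prod = g) :
    wordLength S g ≤ l.length := Nat.sInf_le ⟨l, rfl, hl, hp⟩

lemma inv_word {l : List G} (hl : OkWord S l) :
    OkWord S ((l.map (·⁻¹)).reverse) ∧ ((l.map (·⁻¹)).reverse).prod = l.prod⁻¹ := by
  constructor
  · intro y hy
    simp only [List.mem_reverse, List.mem_map] at hy
    obtain ⟨x, hx, rfl⟩ := hy
    rcases hl x hx with h | h
    · exact Or.inr (by simpa using h)
    · exact Or.inl h
  · rw [← List.prod_inv_reverse]

lemma exists_word (hg : g ∈ Subgroup.closure S) :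
    ∃ l : List G, OkWord S l ∧ l.prod = g := by
  induction hg using Subgroup.closure_induction with
  | mem x hx => exact ⟨[x], by intro y hy; simp at hy; subst hy; exact Or.inl hx, by simp⟩
  | one => exact ⟨[], by intro y hy; simp at hy, by simp⟩
  | mul x y _ _ hx hy =>
      obtain ⟨l1, h1, p1⟩ := hx; obtain ⟨l2, h2, p2⟩ := hy
      refine ⟨l1 ++ l2, ?_, by simp [p1, p2]⟩
      intro z hz
      rcases List.mem_append.1 hz with h | h
      exacts [h1 z h, h2 z h]
  | inv x _ hx =>
      obtain ⟨l, hl, pl⟩ := hx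
      obtain ⟨h1, h2⟩ := inv_word hl
      exact ⟨_, h1, by rw [h2, pl]⟩

lemma exists_min_word (hg : g ∈ Subgroup.closure S) :
    ∃ l : List G, l.length = wordLength S g ∧ OkWord S l ∧ l.prod = g := by
  obtain ⟨l, hl, pl⟩ := exists_word hg
  exact Nat.sInf_mem (s := {n | ∃ l : List G, l.length = n ∧ OkWord S l ∧ l.prod = g})
    ⟨l.length, l, rfl, hl, pl⟩

lemma zpow_word (c : G) (m : ℤ) :
    ∃ Lc : List G, Lc.length = m.natAbs ∧ (∀ y ∈ Lc, y = c ∨ y = c⁻¹) ∧ Lc.prod = c ^ m := by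
  rcases le_or_gt 0 m with hm | hm
  · refine ⟨List.replicate m.natAbs c, List.length_replicate .., ?_, ?_⟩
    · intro y hy; exact Or.inl (List.eq_of_mem_replicate hy)
    · rw [List.prod_replicate, ← zpow_natCast]
      congr 1
      omega
  · refine ⟨List.replicate m.natAbs c⁻¹, List.length_replicate .., ?_, ?_⟩
    · intro y hy; exact Or.inr (List.eq_of_mem_replicate hy)
    · rw [List.prod_replicate, inv_pow, ← zpow_natCast, ← zpow_neg]
      congr 1
      omega

lemma commute_of_closure {s t : Set G} (h : ∀ a ∈ s, ∀ b ∈ t, Commute a b) :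
    ∀ a ∈ Subgroup.closure s, ∀ b ∈ Subgroup.closure t, Commute a b := by
  intro a ha
  induction ha using Subgroup.closure_induction with
  | mem x hx =>
      intro b hb
      induction hb using Subgroup.closure_induction with
      | mem y hy => exact h x hx y hy
      | one => exact Commute.one_right _
      | mul y z _ _ hy hz => exact Commute.mul_right hy hz
      | inv y _ hy => exact Commute.inv_right hy
  | one => intro b _; exact Commute.one_left _
  | mul x y _ _ hx hy => intro b hb; exact Commute.mul_left (hx b hb) (hy b hb)
  | inv x _ hx => intro b hb; exact Commute.inv_left (hx b hb)

end WordLemmas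

lemma prod_map_eq_single {ι M : Type*} [Monoid M] [DecidableEq ι] (f : ι → M) (i₀ : ι) :
    ∀ l : List ι, l.Nodup → (∀ j ∈ l, j ≠ i₀ → f j = 1) →
      (l.map f).prod = if i₀ ∈ l then f i₀ else 1 := by
  intro l
  induction l with
  | nil => simp
  | cons j t ih =>
      intro hnd hj
      simp only [List.map_cons, List.prod_cons]
      rcases List.nodup_cons.1 hnd with ⟨hjt, hndt⟩
      by_cases hji : j = i₀
      · subst hji
        have : (t.map f).prod = 1 := List.prod_eq_one (by
          intro x hx
          simp only [List.mem_map] at hx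
          obtain ⟨k, hk, rfl⟩ := hx
          exact hj k (List.mem_cons_of_mem _ hk) (fun h => hjt (h ▸ hk)))
        simp [this, List.mem_cons]
      · rw [hj j (List.mem_cons_self) hji, one_mul,
          ih hndt (fun k hk => hj k (List.mem_cons_of_mem _ hk))]
        have hij : ¬ i₀ = j := fun h => hji h.symm
        by_cases hi : i₀ ∈ t <;>
          simp [List.mem_cons, hi, hij]

/- ## RAAG lemmas -/
section RaagLemmas
variable {V : Type*} {Γ : SimpleGraph V}

lemma raag_commute {u v : V} (h : Γ.Adj u v) :
    Commute (raagGen Γ u) (raagGen Γ v) := by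
  have hrel : (FreeGroup.of u * FreeGroup.of v * (FreeGroup.of u)⁻¹ * (FreeGroup.of v)⁻¹ :
      FreeGroup V) ∈ Subgroup.normalClosure (raagRels Γ) :=
    Subgroup.subset_normalClosure ⟨u, v, h, rfl⟩
  have h1 : (PresentedGroup.mk (raagRels Γ))
      (FreeGroup.of u * FreeGroup.of v * (FreeGroup.of u)⁻¹ * (FreeGroup.of v)⁻¹) = 1 := by
    rw [← QuotientGroup.eq_one_iff] at hrel
    exact hrel
  simp only [map_mul, map_inv] at h1
  have h2 : raagGen Γ u * raagGen Γ v * (raagGen Γ v * raagGen Γ u)⁻¹ = 1 := by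
    rw [mul_inv_rev, ← mul_assoc]
    exact h1
  exact (commute_iff_eq _ _).2 (mul_inv_eq_one.1 h2)

lemma raag_closure_range : Subgroup.closure (Set.range (raagGen Γ)) = ⊤ :=
  PresentedGroup.closure_range_of _

noncomputable def raagProj (Γ : SimpleGraph V) (U : Set V) : RAAG Γ →* RAAG Γ := by
  classical
  refine PresentedGroup.toGroup (f := fun v => if v ∈ U then raagGen Γ v else 1) ?_
  rintro r ⟨u, v, huv, rfl⟩
  simp only [map_mul, map_inv, FreeGroup.lift_apply_of]
  have hc : Commute (if u ∈ U then raagGen Γ u else 1) (if v ∈ U then raagGen Γ v else 1) := by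
    split_ifs with h1 h2 h2
    · exact raag_commute huv
    · exact Commute.one_right _
    · exact Commute.one_left _
    · exact Commute.one_left _
  rw [hc.eq]
  group

lemma raagProj_gen (U : Set V) (v : V) [Decidable (v ∈ U)] :
    raagProj Γ U (raagGen Γ v) = if v ∈ U then raagGen Γ v else 1 := by
  classical
  have : raagProj Γ U (raagGen Γ v) = _ := PresentedGroup.toGroup.of _
  rw [this]
  congr

lemma raagProj_mem_closure (U : Set V) (x : RAAG Γ) :
    raagProj Γ U x ∈ Subgroup.closure (raagGen Γ '' U) := by
  classical
  have hx : x ∈ (⊤ : Subgroup (RAAG Γ)) := trivial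
  rw [← raag_closure_range] at hx
  induction hx using Subgroup.closure_induction with
  | mem y hy =>
      obtain ⟨v, rfl⟩ := hy
      rw [raagProj_gen]
      split_ifs with h
      · exact Subgroup.subset_closure ⟨v, h, rfl⟩
      · exact one_mem _
  | one => simpa using one_mem _
  | mul a b _ _ ha hb => rw [map_mul]; exact mul_mem ha hb
  | inv a _ ha => rw [map_inv]; exact inv_mem ha

lemma raagProj_commute {U W : Set V} (h : ∀ u ∈ U, ∀ w ∈ W, Γ.Adj u w)
    (x y : RAAG Γ) : Commute (raagProj Γ U x) (raagProj Γ W y) := by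
  refine commute_of_closure ?_ _ (raagProj_mem_closure U x) _ (raagProj_mem_closure W y)
  rintro a ⟨u, hu, rfl⟩ b ⟨w, hw, rfl⟩
  exact raag_commute (h u hu w hw)

end RaagLemmas

section GrpAux
variable {G : Type*} [Group G]

lemma aux1 {a p : G} (h1 : Commute a p) (x : G) (m : ℤ) :
    x * a⁻¹ * p * a ^ (m + 1) = x * (p * a ^ m) := by
  calc x * a⁻¹ * p * a ^ (m + 1)
      = x * (a⁻¹ * p) * a ^ (m + 1) := by rw [mul_assoc x]
    _ = x * (p * a⁻¹) * a ^ (m + 1) := by rw [h1.inv_left.eq]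
    _ = x * p * (a⁻¹ * a ^ (m + 1)) := by rw [← mul_assoc, mul_assoc]
    _ = x * (p * a ^ m) := by rw [show a⁻¹ * a ^ (m+1) = a ^ m by group, mul_assoc]

lemma aux2 {a p v : G} (h1 : Commute a p) (h2 : Commute a v) (m : ℤ) :
    (v * a⁻¹)⁻¹ * p * a ^ (m - 1) = v⁻¹ * (p * a ^ m) := by
  calc (v * a⁻¹)⁻¹ * p * a ^ (m - 1)
      = a * v⁻¹ * p * a ^ (m - 1) := by rw [mul_inv_rev, inv_inv]
    _ = v⁻¹ * a * p * a ^ (m - 1) := by rw [h2.inv_right.eq]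
    _ = v⁻¹ * (a * p) * a ^ (m - 1) := by rw [mul_assoc v⁻¹]
    _ = v⁻¹ * (p * a) * a ^ (m - 1) := by rw [h1.eq]
    _ = v⁻¹ * p * (a * a ^ (m - 1)) := by rw [← mul_assoc, mul_assoc]
    _ = v⁻¹ * (p * a ^ m) := by rw [show a * a ^ (m-1) = a ^ m by group, mul_assoc]

lemma aux3 {a v : G} (h2 : Commute a v) (p : G) (m : ℤ) :
    a ^ (m + 1) * (v * a⁻¹ * p) = v * (a ^ m * p) := by
  calc a ^ (m + 1) * (v * a⁻¹ * p)
      = a ^ (m + 1) * (v * a⁻¹) * p := by rw [← mul_assoc]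
    _ = a ^ (m + 1) * v * a⁻¹ * p := by rw [← mul_assoc]
    _ = v * a ^ (m + 1) * a⁻¹ * p := by rw [(h2.zpow_left (m + 1)).eq]
    _ = v * (a ^ (m + 1) * a⁻¹) * p := by rw [mul_assoc v]
    _ = v * a ^ m * p := by rw [show a ^ (m+1) * a⁻¹ = a ^ m by group]
    _ = v * (a ^ m * p) := by rw [mul_assoc]

lemma aux4 {a v : G} (h2 : Commute a v) (p : G) (m : ℤ) :
    a ^ (m - 1) * ((v * a⁻¹)⁻¹ * p) = v⁻¹ * (a ^ m * p) := by
  calc a ^ (m - 1) * ((v * a⁻¹)⁻¹ * p)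
      = a ^ (m - 1) * (a * v⁻¹ * p) := by rw [mul_inv_rev, inv_inv]
    _ = a ^ (m - 1) * (a * v⁻¹) * p := by rw [← mul_assoc]
    _ = a ^ (m - 1) * a * v⁻¹ * p := by rw [← mul_assoc]
    _ = a ^ m * v⁻¹ * p := by rw [show a ^ (m-1) * a = a ^ m by group]
    _ = v⁻¹ * a ^ m * p := by rw [(h2.zpow_left m).inv_right.eq]
    _ = v⁻¹ * (a ^ m * p) := by rw [mul_assoc]

end GrpAux

theorem stmt19 {V : Type*} [Fintype V] (Γ : SimpleGraph V) (hΓ : Γ.Connected)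
    (d : ℕ) (lab : V → Fin d) (hlab : Function.Surjective lab)
    (Φ : RAAG Γ →* (Fin d → Multiplicative ℤ))
    (hΦ : ∀ v : V, Φ (raagGen Γ v) = Pi.mulSingle (lab v) (Multiplicative.ofAdd 1))
    -- `H_Φ` is strong: each basis subgraph is connected and strongly dominating
    (hstrong : ∀ i : Fin d, (Γ.induce {v : V | lab v = i}).Connected ∧
      ∃ u : V, lab u = i ∧ ∀ v : V, lab v ≠ i → Γ.Adj u v)
    -- each basis subgraph is a join
    (hjoin : ∀ i : Fin d, IsJoin (Γ.induce {v : V | lab v = i}))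
    -- each pair of distinct basis subgraphs commutes
    (hcomm : ∀ i j : Fin d, i ≠ j → ∀ u v : V, lab u = i → lab v = j → Γ.Adj u v) :
    ∀ T : Set (RAAG Γ), T.Finite → T ⊆ (Φ.ker : Set (RAAG Γ)) →
      Subgroup.closure T = Φ.ker →
      FEquiv (distortion (Set.range (raagGen Γ)) T Φ.ker) (fun n => n) := by
  classical
  intro T hTfin hTsub hTcl
  set gen : V → RAAG Γ := raagGen Γ with hgen
  -- extract join data
  choose V1 V2 hV1ne hV2ne hVdisj hVcover hVadj using hjoin
  set SA : Fin d → Set V := fun i => Subtype.val '' (V1 i) with hSAdef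
  set SB : Fin d → Set V := fun i => Subtype.val '' (V2 i) with hSBdef
  have hSAlab : ∀ i v, v ∈ SA i → lab v = i := by
    rintro i v ⟨⟨w, hw⟩, -, rfl⟩; exact hw
  have hSBlab : ∀ i v, v ∈ SB i → lab v = i := by
    rintro i v ⟨⟨w, hw⟩, -, rfl⟩; exact hw
  have hABadj : ∀ i, ∀ u ∈ SA i, ∀ w ∈ SB i, Γ.Adj u w := by
    rintro i u ⟨a, ha, rfl⟩ w ⟨b, hb, rfl⟩
    exact hVadj i a ha b hb
  have hcover : ∀ v, v ∈ SA (lab v) ∨ v ∈ SB (lab v) := by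
    intro v
    have hv : (⟨v, rfl⟩ : {w : V | lab w = lab v}) ∈ V1 (lab v) ∪ V2 (lab v) := by
      rw [hVcover]; trivial
    rcases hv with h | h
    · exact Or.inl ⟨_, h, rfl⟩
    · exact Or.inr ⟨_, h, rfl⟩
  have hdisj : ∀ i v, v ∈ SA i → v ∈ SB i → False := by
    rintro i v ⟨a, ha, rfl⟩ ⟨b, hb, hb2⟩
    have hab : b = a := Subtype.ext hb2
    exact Set.disjoint_left.1 (hVdisj i) ha (hab ▸ hb)
  choose avs havs using hV1ne
  choose bvs hbvs using hV2ne
  set av : Fin d → V := fun i => (avs i).val with havdef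
  set bv : Fin d → V := fun i => (bvs i).val with hbvdef
  have hav : ∀ i, av i ∈ SA i := fun i => ⟨avs i, havs i, rfl⟩
  have hbv : ∀ i, bv i ∈ SB i := fun i => ⟨bvs i, hbvs i, rfl⟩
  have havlab : ∀ i, lab (av i) = i := fun i => hSAlab i _ (hav i)
  have hbvlab : ∀ i, lab (bv i) = i := fun i => hSBlab i _ (hbv i)
  -- cross-class adjacency
  have hclasslab : ∀ i v, v ∈ SA i ∪ SB i → lab v = i := by
    rintro i v (h | h); exacts [hSAlab i v h, hSBlab i v h]
  have hcross : ∀ i j, i ≠ j → ∀ u ∈ SA i ∪ SB i, ∀ w ∈ SA j ∪ SB j, Γ.Adj u w := by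
    intro i j hij u hu w hw
    exact hcomm i j hij u w (hclasslab i u hu) (hclasslab j w hw)
  -- projections
  set QA : Fin d → (RAAG Γ →* RAAG Γ) := fun i => raagProj Γ (SA i) with hQAdef
  set QB : Fin d → (RAAG Γ →* RAAG Γ) := fun i => raagProj Γ (SB i) with hQBdef
  have hQAQB : ∀ i x y, Commute (QA i x) (QB i y) := fun i x y =>
    raagProj_commute (fun u hu w hw => hABadj i u hu w hw) x y
  have hPmul : ∀ i (a b : RAAG Γ),
      QA i (a * b) * QB i (a * b) = (QA i a * QB i a) * (QA i b * QB i b) := by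
    intro i a b
    rw [map_mul, map_mul]
    rw [mul_assoc, mul_assoc]
    congr 1
    rw [← mul_assoc, (hQAQB i b a).eq, mul_assoc]
  set P : Fin d → (RAAG Γ →* RAAG Γ) := fun i =>
    MonoidHom.mk' (fun x => QA i x * QB i x) (hPmul i) with hPdef
  have hP_apply : ∀ i x, P i x = QA i x * QB i x := fun i x => rfl
  have hP_gen : ∀ i v, P i (gen v) = if lab v = i then gen v else 1 := by
    intro i v
    rw [hP_apply]
    show raagProj Γ (SA i) (raagGen Γ v) * raagProj Γ (SB i) (raagGen Γ v) = _
    rw [raagProj_gen, raagProj_gen]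
    by_cases hlv : lab v = i
    · rcases hcover v with h | h
      · rw [hlv] at h
        rw [if_pos h, if_neg (fun h2 => hdisj i v h h2), if_pos hlv, mul_one]
      · rw [hlv] at h
        rw [if_neg (fun h2 => hdisj i v h2 h), if_pos h, if_pos hlv, one_mul]
    · rw [if_neg (fun h => hlv (hSAlab i v h)), if_neg (fun h => hlv (hSBlab i v h)),
        if_neg hlv, one_mul]
  have hP_mem : ∀ i x, P i x ∈ Subgroup.closure (gen '' (SA i ∪ SB i)) := by
    intro i x
    rw [hP_apply]
    refine mul_mem ?_ ?_
    · exact Subgroup.closure_mono (Set.image_mono Set.subset_union_left)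
        (raagProj_mem_closure (SA i) x)
    · exact Subgroup.closure_mono (Set.image_mono Set.subset_union_right)
        (raagProj_mem_closure (SB i) x)
  have hP_comm : ∀ i j, i ≠ j → ∀ x y, Commute (P i x) (P j y) := by
    intro i j hij x y
    refine commute_of_closure ?_ _ (hP_mem i x) _ (hP_mem j y)
    rintro a ⟨u, hu, rfl⟩ b ⟨w, hw, rfl⟩
    exact raag_commute (hcross i j hij u hu w hw)
  -- product over a list of labels
  have hML : ∀ l : List (Fin d), l.Nodup → ∀ x y : RAAG Γ,
      (l.map fun i => P i (x * y)).prod = (l.map fun i => P i x).prod * (l.map fun i => P i y).prod := by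
    intro l
    induction l with
    | nil => intro _ x y; simp
    | cons i t ih =>
        intro hnd x y
        rcases List.nodup_cons.1 hnd with ⟨hit, hndt⟩
        simp only [List.map_cons, List.prod_cons]
        rw [ih hndt x y, map_mul]
        have hcomm1 : Commute (P i y) ((t.map fun j => P j x).prod) := by
          refine Commute.list_prod_right _ _ ?_
          intro z hz
          simp only [List.mem_map] at hz
          obtain ⟨j, hjt, rfl⟩ := hz
          exact hP_comm i j (fun h => hit (h ▸ hjt)) y x
        rw [mul_assoc, ← mul_assoc (P i y), hcomm1.eq, mul_assoc, ← mul_assoc, ← mul_assoc]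
  have hMLone : ((List.finRange d).map fun i => P i (1 : RAAG Γ)).prod = 1 :=
    List.prod_eq_one (by
      intro x hx
      simp only [List.mem_map] at hx
      obtain ⟨j, -, rfl⟩ := hx
      exact map_one (P j))
  have hDecomp : ∀ x : RAAG Γ, ((List.finRange d).map fun i => P i x).prod = x := by
    intro x
    have hx : x ∈ Subgroup.closure (Set.range gen) := by
      rw [hgen, raag_closure_range]; trivial
    induction hx using Subgroup.closure_induction with
    | mem y hy =>
        obtain ⟨v, rfl⟩ := hy
        rw [prod_map_eq_single (fun i => P i (gen v)) (lab v) _ (List.nodup_finRange d)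
          (fun j _ hj => by show P j (gen v) = 1; rw [hP_gen]; exact if_neg (fun h => hj h.symm))]
        rw [if_pos (List.mem_finRange _), hP_gen, if_pos rfl]
    | one => exact hMLone
    | mul a b _ _ ha hb => rw [hML _ (List.nodup_finRange d) a b, ha, hb]
    | inv a _ ha =>
        have h1 : ((List.finRange d).map fun i => P i (a⁻¹ * a)).prod
            = ((List.finRange d).map fun i => P i a⁻¹).prod
              * ((List.finRange d).map fun i => P i a).prod :=
          hML _ (List.nodup_finRange d) a⁻¹ a
        rw [inv_mul_cancel, hMLone] at h1
        rw [ha] at h1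
        exact eq_inv_of_mul_eq_one_left h1.symm
  -- Φ evaluation helpers
  set evΦ : Fin d → (RAAG Γ →* Multiplicative ℤ) := fun j =>
    (Pi.evalMonoidHom (fun _ : Fin d => Multiplicative ℤ) j).comp Φ with hevdef
  have hev_apply : ∀ j x, evΦ j x = Φ x j := fun j x => rfl
  have hev_gen : ∀ (v : V) (j : Fin d), evΦ j (gen v)
      = if lab v = j then Multiplicative.ofAdd 1 else 1 := by
    intro v j
    rw [hev_apply, hΦ v]
    by_cases h : lab v = j
    · subst h; simp
    · rw [Pi.mulSingle_apply, if_neg (fun hh => h hh.symm), if_neg h]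
  have hΦ_class : ∀ i j : Fin d, i ≠ j → ∀ x ∈ Subgroup.closure (gen '' (SA i ∪ SB i)),
      evΦ j x = 1 := by
    intro i j hij x hx
    induction hx using Subgroup.closure_induction with
    | mem y hy =>
        obtain ⟨v, hv, rfl⟩ := hy
        rw [hev_gen, if_neg]
        rw [hclasslab i v hv]
        exact hij
    | one => exact map_one _
    | mul a b _ _ ha hb => rw [map_mul, ha, hb, mul_one]
    | inv a _ ha => rw [map_inv, ha, inv_one]
  -- rewriting lemmas: push a fixed commuting letter out of a word
  have hRW : ∀ (U : Set V) (tv : V), (∀ v ∈ U, Γ.Adj tv v) →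
      ∀ l' : List (RAAG Γ), (∀ x ∈ l', x = 1 ∨ ∃ v ∈ U, x = gen v ∨ x = (gen v)⁻¹) →
      ∃ (L : List (RAAG Γ)) (m : ℤ), L.length = l'.length ∧ m.natAbs ≤ l'.length ∧
        (∀ y ∈ L, y = 1 ∨ ∃ v ∈ U, y = gen v * (gen tv)⁻¹ ∨ y = (gen v * (gen tv)⁻¹)⁻¹) ∧
        L.prod * (gen tv) ^ m = l'.prod := by
    intro U tv htv l'
    induction l' with
    | nil => exact fun _ => ⟨[], 0, rfl, by simp, by simp, by simp⟩
    | cons x t ih =>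
        intro hlet
        obtain ⟨L, m, hlen, hm, hLlet, hLp⟩ := ih (fun y hy => hlet y (List.mem_cons_of_mem _ hy))
        have hCtv : Commute (gen tv) L.prod := by
          refine Commute.list_prod_right _ _ ?_
          intro y hy
          rcases hLlet y hy with rfl | ⟨v, hv, rfl | rfl⟩
          · exact Commute.one_right _
          · exact Commute.mul_right (raag_commute (htv v hv)) (Commute.inv_right rfl)
          · exact Commute.inv_right
              (Commute.mul_right (raag_commute (htv v hv)) (Commute.inv_right rfl))
        rcases hlet x (List.mem_cons_self) with rfl | ⟨v, hv, rfl | rfl⟩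
        · refine ⟨1 :: L, m, by simp [hlen], by simp only [List.length_cons]; omega, ?_, by
            simp only [List.prod_cons, one_mul]; exact hLp⟩
          intro y hy
          rcases List.mem_cons.1 hy with rfl | hy
          · exact Or.inl rfl
          · exact hLlet y hy
        · refine ⟨(gen v * (gen tv)⁻¹) :: L, m + 1, by simp [hlen],
            by simp only [List.length_cons]; omega, ?_, ?_⟩
          · intro y hy
            rcases List.mem_cons.1 hy with rfl | hy
            · exact Or.inr ⟨v, hv, Or.inl rfl⟩
            · exact hLlet y hy
          · simp only [List.prod_cons]
            rw [aux1 hCtv (gen v) m, hLp]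
        · refine ⟨(gen v * (gen tv)⁻¹)⁻¹ :: L, m - 1, by simp [hlen],
            by simp only [List.length_cons]; omega, ?_, ?_⟩
          · intro y hy
            rcases List.mem_cons.1 hy with rfl | hy
            · exact Or.inr ⟨v, hv, Or.inr rfl⟩
            · exact hLlet y hy
          · simp only [List.prod_cons]
            rw [aux2 hCtv (raag_commute (htv v hv)) m, hLp]
  have hRW' : ∀ (U : Set V) (tv : V), (∀ v ∈ U, Γ.Adj tv v) →
      ∀ l' : List (RAAG Γ), (∀ x ∈ l', x = 1 ∨ ∃ v ∈ U, x = gen v ∨ x = (gen v)⁻¹) →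
      ∃ (L : List (RAAG Γ)) (m : ℤ), L.length = l'.length ∧ m.natAbs ≤ l'.length ∧
        (∀ y ∈ L, y = 1 ∨ ∃ v ∈ U, y = gen v * (gen tv)⁻¹ ∨ y = (gen v * (gen tv)⁻¹)⁻¹) ∧
        (gen tv) ^ m * L.prod = l'.prod := by
    intro U tv htv l'
    induction l' with
    | nil => exact fun _ => ⟨[], 0, rfl, by simp, by simp, by simp⟩
    | cons x t ih =>
        intro hlet
        obtain ⟨L, m, hlen, hm, hLlet, hLp⟩ := ih (fun y hy => hlet y (List.mem_cons_of_mem _ hy))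
        rcases hlet x (List.mem_cons_self) with rfl | ⟨v, hv, rfl | rfl⟩
        · refine ⟨1 :: L, m, by simp [hlen], by simp only [List.length_cons]; omega, ?_, by
            simp only [List.prod_cons, one_mul]; exact hLp⟩
          intro y hy
          rcases List.mem_cons.1 hy with rfl | hy
          · exact Or.inl rfl
          · exact hLlet y hy
        · refine ⟨(gen v * (gen tv)⁻¹) :: L, m + 1, by simp [hlen],
            by simp only [List.length_cons]; omega, ?_, ?_⟩
          · intro y hy
            rcases List.mem_cons.1 hy with rfl | hy
            · exact Or.inr ⟨v, hv, Or.inl rfl⟩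
            · exact hLlet y hy
          · simp only [List.prod_cons]
            rw [aux3 (raag_commute (htv v hv)) L.prod m, hLp]
        · refine ⟨(gen v * (gen tv)⁻¹)⁻¹ :: L, m - 1, by simp [hlen],
            by simp only [List.length_cons]; omega, ?_, ?_⟩
          · intro y hy
            rcases List.mem_cons.1 hy with rfl | hy
            · exact Or.inr ⟨v, hv, Or.inr rfl⟩
            · exact hLlet y hy
          · simp only [List.prod_cons]
            rw [aux4 (raag_commute (htv v hv)) L.prod m, hLp]
  -- kernel pairs and the finite bound M
  have hker_pair : ∀ v w : V, lab v = lab w → (gen v * (gen w)⁻¹) ∈ Φ.ker := by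
    intro v w hvw
    rw [MonoidHom.mem_ker, map_mul, map_inv, hΦ, hΦ, hvw]
    simp
  set M : ℕ := (Finset.univ : Finset (V × V)).sup
    (fun p => wordLength T (gen p.1 * (gen p.2)⁻¹)) with hMdef
  -- letter condition for the intermediate alphabet
  set Cond : RAAG Γ → Prop := fun y => y = 1 ∨ (∃ v w : V, lab v = lab w ∧ y = gen v * (gen w)⁻¹)
      ∨ (∃ v w : V, lab v = lab w ∧ y⁻¹ = gen v * (gen w)⁻¹) with hConddef
  -- substitution of intermediate letters by T-words
  have hSUB : ∀ L : List (RAAG Γ), (∀ y ∈ L, Cond y) →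
      ∃ W : List (RAAG Γ), W.length ≤ M * L.length ∧ OkWord T W ∧ W.prod = L.prod := by
    intro L
    induction L with
    | nil => exact fun _ => ⟨[], by simp, by intro y hy; simp at hy, by simp⟩
    | cons y t ih =>
        intro hlet
        obtain ⟨Wt, hWtlen, hWtok, hWtp⟩ := ih (fun z hz => hlet z (List.mem_cons_of_mem _ hz))
        have hstep : ∀ z : RAAG Γ, (∃ v w : V, lab v = lab w ∧ z = gen v * (gen w)⁻¹) →
            ∃ w' : List (RAAG Γ), w'.length ≤ M ∧ OkWord T w' ∧ w'.prod = z := by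
          rintro z ⟨v, w, hvw, rfl⟩
          have hz : gen v * (gen w)⁻¹ ∈ Subgroup.closure T := by
            rw [hTcl]; exact hker_pair v w hvw
          obtain ⟨l0, hl0len, hl0ok, hl0p⟩ := exists_min_word hz
          refine ⟨l0, ?_, hl0ok, hl0p⟩
          rw [hl0len, hMdef]
          exact Finset.le_sup (f := fun p : V × V => wordLength T (gen p.1 * (gen p.2)⁻¹))
            (Finset.mem_univ (v, w))
        rcases hlet y (List.mem_cons_self) with rfl | hy | hy
        · refine ⟨Wt, ?_, hWtok, by simp only [List.prod_cons, one_mul]; exact hWtp⟩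
          refine le_trans hWtlen (Nat.mul_le_mul_left M ?_)
          simp
        · obtain ⟨w', hw'len, hw'ok, hw'p⟩ := hstep y hy
          refine ⟨w' ++ Wt, ?_, ?_, ?_⟩
          · rw [List.length_append, List.length_cons, Nat.mul_succ]
            omega
          · intro z hz
            rcases List.mem_append.1 hz with h | h
            exacts [hw'ok z h, hWtok z h]
          · rw [List.prod_append, hw'p, hWtp, List.prod_cons]
        · obtain ⟨w', hw'len, hw'ok, hw'p⟩ := hstep y⁻¹ hy
          obtain ⟨hok2, hp2⟩ := inv_word hw'ok
          refine ⟨(w'.map (·⁻¹)).reverse ++ Wt, ?_, ?_, ?_⟩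
          · rw [List.length_append, List.length_reverse, List.length_map, List.length_cons,
              Nat.mul_succ]
            omega
          · intro z hz
            rcases List.mem_append.1 hz with h | h
            exacts [hok2 z h, hWtok z h]
          · rw [List.prod_append, hp2, hw'p, inv_inv, hWtp, List.prod_cons]
  -- the central quantitative estimate
  have hMain : ∀ (h : RAAG Γ), h ∈ Φ.ker → ∀ r : ℕ, wordLength (Set.range gen) h ≤ r →
      wordLength T h ≤ M * (3 * r * d) := by
    intro h hker r hr
    have hh : h ∈ Subgroup.closure (Set.range gen) := by
      rw [hgen, raag_closure_range]; trivial
    obtain ⟨l, hllen, hlok, hlp⟩ := exists_min_word hh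
    have hlr : l.length ≤ r := by rw [hllen]; exact hr
    -- per-class word
    have hPer : ∀ i : Fin d, ∃ Li : List (RAAG Γ), Li.length ≤ 3 * r ∧ (∀ y ∈ Li, Cond y) ∧
        Li.prod = P i h := by
      intro i
      set lA : List (RAAG Γ) := l.map (QA i) with hlAdef
      set lB : List (RAAG Γ) := l.map (QB i) with hlBdef
      have hproj_letter : ∀ (U : Set V) (x : RAAG Γ), (x ∈ Set.range gen ∨ x⁻¹ ∈ Set.range gen) →
          raagProj Γ U x = 1 ∨ ∃ v ∈ U, raagProj Γ U x = gen v ∨ raagProj Γ U x = (gen v)⁻¹ := by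
        rintro U x (⟨v, rfl⟩ | ⟨v, hv⟩)
        · rw [hgen, raagProj_gen]
          split_ifs with hU
          · exact Or.inr ⟨v, hU, Or.inl rfl⟩
          · exact Or.inl rfl
        · have hx : x = (gen v)⁻¹ := by rw [hv, inv_inv]
          subst hx
          rw [map_inv, hgen, raagProj_gen]
          split_ifs with hU
          · exact Or.inr ⟨v, hU, Or.inr rfl⟩
          · exact Or.inl (by simp)
      have hlAlet : ∀ x ∈ lA, x = 1 ∨ ∃ v ∈ SA i, x = gen v ∨ x = (gen v)⁻¹ := by
        intro x hx
        rw [hlAdef] at hx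
        obtain ⟨y, hy, rfl⟩ := List.mem_map.1 hx
        exact hproj_letter (SA i) y (hlok y hy)
      have hlBlet : ∀ x ∈ lB, x = 1 ∨ ∃ v ∈ SB i, x = gen v ∨ x = (gen v)⁻¹ := by
        intro x hx
        rw [hlBdef] at hx
        obtain ⟨y, hy, rfl⟩ := List.mem_map.1 hx
        exact hproj_letter (SB i) y (hlok y hy)
      have hlAprod : lA.prod = QA i h := by
        rw [hlAdef, ← map_list_prod (QA i) l, hlp]
      have hlBprod : lB.prod = QB i h := by
        rw [hlBdef, ← map_list_prod (QB i) l, hlp]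
      obtain ⟨LA, mA, hLAlen, hmA, hLAlet, hLAp⟩ :=
        hRW (SA i) (bv i) (fun v hv => (hABadj i v hv (bv i) (hbv i)).symm) lA hlAlet
      obtain ⟨LB, mB, hLBlen, hmB, hLBlet, hLBp⟩ :=
        hRW' (SB i) (av i) (fun v hv => hABadj i (av i) (hav i) v hv) lB hlBlet
      rw [hlAprod] at hLAp
      rw [hlBprod] at hLBp
      have e2 : P i h = LA.prod * (gen (bv i)) ^ mA * ((gen (av i)) ^ mB * LB.prod) := by
        rw [hP_apply, ← hLAp, ← hLBp]
      -- Φ bookkeeping : mA + mB = 0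
      have hevLA : evΦ i LA.prod = 1 := by
        rw [map_list_prod]
        refine List.prod_eq_one ?_
        intro z hz
        obtain ⟨y, hy, rfl⟩ := List.mem_map.1 hz
        rcases hLAlet y hy with rfl | ⟨v, hv, rfl | rfl⟩
        · exact map_one _
        · have hk : Φ (gen v * (gen (bv i))⁻¹) = 1 :=
            hker_pair v (bv i) (by rw [hSAlab i v hv, hbvlab i])
          rw [hev_apply, hk]
          rfl
        · have hk : Φ (gen v * (gen (bv i))⁻¹) = 1 :=
            hker_pair v (bv i) (by rw [hSAlab i v hv, hbvlab i])
          rw [map_inv, hev_apply, hk]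
          simp
      have hevLB : evΦ i LB.prod = 1 := by
        rw [map_list_prod]
        refine List.prod_eq_one ?_
        intro z hz
        obtain ⟨y, hy, rfl⟩ := List.mem_map.1 hz
        rcases hLBlet y hy with rfl | ⟨v, hv, rfl | rfl⟩
        · exact map_one _
        · have hk : Φ (gen v * (gen (av i))⁻¹) = 1 :=
            hker_pair v (av i) (by rw [hSBlab i v hv, havlab i])
          rw [hev_apply, hk]
          rfl
        · have hk : Φ (gen v * (gen (av i))⁻¹) = 1 :=
            hker_pair v (av i) (by rw [hSBlab i v hv, havlab i])
          rw [map_inv, hev_apply, hk]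
          simp
      have hPih1 : evΦ i (P i h) = 1 := by
        have e3 : evΦ i h = ((List.finRange d).map fun j => evΦ i (P j h)).prod := by
          conv_lhs => rw [← hDecomp h]
          rw [map_list_prod, List.map_map]
          rfl
        rw [prod_map_eq_single (fun j => evΦ i (P j h)) i _ (List.nodup_finRange d)
          (fun j _ hji => hΦ_class j i (fun hh => hji hh) _ (hP_mem j h)),
          if_pos (List.mem_finRange _)] at e3
        rw [MonoidHom.mem_ker] at hker
        rw [← e3, hev_apply, hker]
        rfl
      have hmAB : mA + mB = 0 := by
        have e4 : (evΦ i) ((P i) h)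
            = Multiplicative.ofAdd 1 ^ mA * Multiplicative.ofAdd 1 ^ mB := by
          rw [e2, map_mul, map_mul, map_mul, map_zpow, map_zpow, hevLA, hevLB,
            hev_gen, hev_gen, if_pos (hbvlab i), if_pos (havlab i), one_mul, mul_one]
        rw [hPih1] at e4
        have e5 := congrArg Multiplicative.toAdd e4.symm
        simp only [toAdd_one, toAdd_mul, toAdd_zpow, toAdd_ofAdd, smul_eq_mul, mul_one] at e5
        omega
      -- the bridging power
      obtain ⟨Lc, hLclen, hLclet, hLcp⟩ := zpow_word (gen (bv i) * (gen (av i))⁻¹) mA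
      have hab : Commute (gen (bv i)) (gen (av i)) :=
        (raag_commute (hABadj i (av i) (hav i) (bv i) (hbv i))).symm
      have hcz : (gen (bv i) * (gen (av i))⁻¹) ^ mA = (gen (bv i)) ^ mA * (gen (av i)) ^ mB := by
        have hmb : mB = -mA := by omega
        rw [hab.inv_right.mul_zpow, inv_zpow, ← zpow_neg, hmb]
      refine ⟨LA ++ (Lc ++ LB), ?_, ?_, ?_⟩
      · rw [List.length_append, List.length_append]
        have h1 : LA.length ≤ r := by rw [hLAlen, hlAdef, List.length_map]; exact hlr
        have h2 : LB.length ≤ r := by rw [hLBlen, hlBdef, List.length_map]; exact hlr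
        have h3 : Lc.length ≤ r := by
          rw [hLclen]
          refine le_trans ?_ hlr
          rw [hlAdef, List.length_map] at hmA
          exact hmA
        omega
      · intro y hy
        rcases List.mem_append.1 hy with h1 | h1
        · rcases hLAlet y h1 with rfl | ⟨v, hv, rfl | rfl⟩
          · exact Or.inl rfl
          · exact Or.inr (Or.inl ⟨v, bv i, by rw [hSAlab i v hv, hbvlab i], rfl⟩)
          · exact Or.inr (Or.inr ⟨v, bv i, by rw [hSAlab i v hv, hbvlab i], by rw [inv_inv]⟩)
        · rcases List.mem_append.1 h1 with h2 | h2
          · rcases hLclet y h2 with rfl | rfl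
            · exact Or.inr (Or.inl ⟨bv i, av i, by rw [hbvlab i, havlab i], rfl⟩)
            · exact Or.inr (Or.inr ⟨bv i, av i, by rw [hbvlab i, havlab i], by rw [inv_inv]⟩)
          · rcases hLBlet y h2 with rfl | ⟨v, hv, rfl | rfl⟩
            · exact Or.inl rfl
            · exact Or.inr (Or.inl ⟨v, av i, by rw [hSBlab i v hv, havlab i], rfl⟩)
            · exact Or.inr (Or.inr ⟨v, av i, by rw [hSBlab i v hv, havlab i], by rw [inv_inv]⟩)
      · rw [List.prod_append, List.prod_append, hLcp, hcz, e2]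
        rw [mul_assoc (gen (bv i) ^ mA), ← mul_assoc LA.prod]
    -- assemble all classes
    have hASM : ∀ ls : List (Fin d), ∃ LL : List (RAAG Γ), LL.length ≤ 3 * r * ls.length ∧
        (∀ y ∈ LL, Cond y) ∧ LL.prod = (ls.map fun i => P i h).prod := by
      intro ls
      induction ls with
      | nil => exact ⟨[], by simp, by intro y hy; simp at hy, by simp⟩
      | cons i t ih =>
          obtain ⟨LL, hLLlen, hLLlet, hLLp⟩ := ih
          obtain ⟨Li, hLilen, hLilet, hLip⟩ := hPer i
          refine ⟨Li ++ LL, ?_, ?_, ?_⟩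
          · rw [List.length_append, List.length_cons, Nat.mul_succ]
            omega
          · intro y hy
            rcases List.mem_append.1 hy with h1 | h1
            exacts [hLilet y h1, hLLlet y h1]
          · rw [List.prod_append, hLip, hLLp, List.map_cons, List.prod_cons]
    obtain ⟨LL, hLLlen, hLLlet, hLLp⟩ := hASM (List.finRange d)
    rw [hDecomp h] at hLLp
    obtain ⟨W, hWlen, hWok, hWp⟩ := hSUB LL hLLlet
    refine le_trans (wordLength_le hWok (hWp.trans hLLp)) (le_trans hWlen ?_)
    refine Nat.mul_le_mul_left M ?_
    rw [List.length_finRange] at hLLlen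
    exact hLLlen
  -- distortion bound
  have hdist : ∀ r : ℕ, distortion (Set.range gen) T Φ.ker r ≤ M * (3 * r * d) := by
    intro r
    refine csSup_le' ?_
    rintro n ⟨h, hker, hlen, rfl⟩
    exact hMain h hker r hlen
  constructor
  · refine ⟨M * 3 * d + 1, 1, 1, 0, Nat.succ_pos _, Nat.one_pos, Nat.one_pos, ?_⟩
    intro x hx
    have h1 := hdist x
    have h2 : M * (3 * x * d) = (M * 3 * d) * x := by ring
    simp only [one_mul]
    calc distortion (Set.range gen) T Φ.ker x ≤ (M * 3 * d) * x := by rw [← h2]; exact h1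
      _ ≤ (M * 3 * d + 1) * x := Nat.mul_le_mul_right x (Nat.le_succ _)
      _ ≤ (M * 3 * d + 1) * x + x := Nat.le_add_right _ _
  · refine ⟨1, 1, 1, 0, Nat.one_pos, Nat.one_pos, Nat.one_pos, ?_⟩
    intro x hx
    simp only [one_mul]
    exact Nat.le_add_left x _
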